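/- Let B₁, B₂ be bialgebras, φ : B₂ → B₁ a bialgebra morphism, A_i a B_i-module algebra (i=1,2), and h : A₁ → A₂ an algebra morphism satisfying b·h(a) = h(φ(b)·a) for all b ∈ B₂, a ∈ A₁. Suppose F_i ∈ B_i⊗B_i are twisting elements and G ∈ B₁ satisfies Δ(G)F₁ = (φ⊗φ)(F₂)(G⊗G). Then the map h̃ : A₁ → A₂ defined by h̃(a) := h(G·a) is a morphism of the twisted algebras (A₁, *₁) → (A₂, *₂), where a *_i b := μ_{A_i}(F_i(a⊗b)). -/

import Mathlib

open TensorProduct Coalgebra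

section Prelude

variable (R : Type*) [CommRing R]
variable (B : Type*) [Ring B] [Bialgebra R B]
variable (A : Type*) [Ring A] [Algebra R A]

/-- The action of `B ⊗ B` on `A ⊗ A` induced by a representation `ρ : B → End A`. -/
noncomputable def act2 (ρ : B →ₐ[R] Module.End R A) :
    B ⊗[R] B →ₗ[R] (A ⊗[R] A) →ₗ[R] A ⊗[R] A :=
  TensorProduct.homTensorHomMap (RingHom.id R) A A A A ∘ₗ TensorProduct.map ρ.toLinearMap ρ.toLinearMap

/-- `A` is a left `B`-module algebra via `ρ`: the multiplication of `A` is `B`-linear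
(with respect to the diagonal action on `A ⊗ A`), and `b • 1 = ε(b) • 1`. -/
def IsModuleAlgebra (ρ : B →ₐ[R] Module.End R A) : Prop :=
  (∀ b : B, (ρ b) ∘ₗ LinearMap.mul' R A =
      LinearMap.mul' R A ∘ₗ act2 R B A ρ (Coalgebra.comul b)) ∧
  (∀ b : B, ρ b 1 = Coalgebra.counit (R := R) b • (1 : A))

/-- `F ∈ B ⊗ B` is a twisting element: `[(Δ⊗id)F](F⊗1) = [(id⊗Δ)F](1⊗F)` and
`(ε⊗id)F = 1 = (id⊗ε)F`. -/
def IsTwisting (F : B ⊗[R] B) : Prop :=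
  (TensorProduct.map Coalgebra.comul LinearMap.id F) * (F ⊗ₜ[R] (1 : B)) =
    (TensorProduct.assoc R B B B).symm
      ((TensorProduct.map LinearMap.id Coalgebra.comul F) * ((1 : B) ⊗ₜ[R] F)) ∧
  TensorProduct.lid R B (TensorProduct.map Coalgebra.counit LinearMap.id F) = 1 ∧
  TensorProduct.rid R B (TensorProduct.map LinearMap.id Coalgebra.counit F) = 1

/-- The multiplication twisted by `F`: `a * b := μ_A (F (a ⊗ b))`. -/
noncomputable def twMul (ρ : B →ₐ[R] Module.End R A) (F : B ⊗[R] B) (a b : A) : A :=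
  LinearMap.mul' R A (act2 R B A ρ F (a ⊗ₜ[R] b))

end Prelude


section Helpers

variable {R : Type*} [CommRing R]
variable {B : Type*} [Ring B] [Bialgebra R B]
variable {A : Type*} [Ring A] [Algebra R A]

lemma act2_tmul (ρ : B →ₐ[R] Module.End R A) (b₁ b₂ : B) :
    act2 R B A ρ (b₁ ⊗ₜ[R] b₂) = TensorProduct.map (ρ b₁) (ρ b₂) := by
  simp [act2]

lemma act2_mul (ρ : B →ₐ[R] Module.End R A) (x y : B ⊗[R] B) :
    act2 R B A ρ (x * y) = act2 R B A ρ x ∘ₗ act2 R B A ρ y := by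
  induction x using TensorProduct.induction_on with
  | zero => simp
  | add x₁ x₂ h₁ h₂ => simp [add_mul, h₁, h₂, LinearMap.add_comp]
  | tmul b₁ b₂ =>
    induction y using TensorProduct.induction_on with
    | zero => simp
    | add y₁ y₂ h₁ h₂ => simp [mul_add, h₁, h₂, LinearMap.comp_add]
    | tmul c₁ c₂ =>
      rw [Algebra.TensorProduct.tmul_mul_tmul, act2_tmul, act2_tmul, act2_tmul,
        map_mul, map_mul]
      exact TensorProduct.map_comp (ρ b₁) (ρ b₂) (ρ c₁) (ρ c₂)

end Helpers

/-- Given a bialgebra morphism `φ : B₂ → B₁`, module algebras `A i`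
over `B i`, an equivariant algebra morphism `h : A₁ → A₂`, twisting elements `F i` and
`G ∈ B₁` with `Δ(G)F₁ = (φ⊗φ)(F₂)(G⊗G)`, the map `h̃(a) := h(G·a)` is a morphism of
the twisted algebras. -/
theorem twisted_morphism
    (k : Type*) [Field k] [CharZero k]
    (B₁ B₂ : Type*) [Ring B₁] [Ring B₂] [Bialgebra k B₁] [Bialgebra k B₂]
    (A₁ A₂ : Type*) [Ring A₁] [Ring A₂] [Algebra k A₁] [Algebra k A₂]
    (φ : B₂ →ₐc[k] B₁)
    (ρ₁ : B₁ →ₐ[k] Module.End k A₁) (hρ₁ : IsModuleAlgebra k B₁ A₁ ρ₁)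
    (ρ₂ : B₂ →ₐ[k] Module.End k A₂) (hρ₂ : IsModuleAlgebra k B₂ A₂ ρ₂)
    (h : A₁ →ₐ[k] A₂)
    (hequiv : ∀ (b : B₂) (a : A₁), ρ₂ b (h a) = h (ρ₁ (φ b) a))
    (F₁ : B₁ ⊗[k] B₁) (hF₁ : IsTwisting k B₁ F₁)
    (F₂ : B₂ ⊗[k] B₂) (hF₂ : IsTwisting k B₂ F₂)
    (G : B₁)
    (hG : Coalgebra.comul (R := k) G * F₁ =
      (TensorProduct.map φ.toLinearMap φ.toLinearMap F₂) * (G ⊗ₜ[k] G)) :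
    ∀ a b : A₁,
      h (ρ₁ G (twMul k B₁ A₁ ρ₁ F₁ a b)) =
        twMul k B₂ A₂ ρ₂ F₂ (h (ρ₁ G a)) (h (ρ₁ G b)) := by
  
  intro a b
  have hmul : ∀ z : A₁ ⊗[k] A₁,
      h (LinearMap.mul' k A₁ z) =
        LinearMap.mul' k A₂ (TensorProduct.map h.toLinearMap h.toLinearMap z) := by
    intro z
    induction z using TensorProduct.induction_on with
    | zero => simp
    | add x y hx hy => simp [map_add, hx, hy]
    | tmul x y => simp [LinearMap.mul'_apply]
  have hequiv2 : ∀ (F : B₂ ⊗[k] B₂) (z : A₁ ⊗[k] A₁),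
      act2 k B₂ A₂ ρ₂ F (TensorProduct.map h.toLinearMap h.toLinearMap z) =
        TensorProduct.map h.toLinearMap h.toLinearMap
          (act2 k B₁ A₁ ρ₁ (TensorProduct.map φ.toLinearMap φ.toLinearMap F) z) := by
    intro F z
    induction F using TensorProduct.induction_on with
    | zero => simp
    | add x y hx hy => simp [map_add, LinearMap.add_apply, hx, hy]
    | tmul b₁ b₂ =>
      simp only [TensorProduct.map_tmul, act2_tmul]
      induction z using TensorProduct.induction_on with
      | zero => simp
      | add x y hx hy => simp [map_add, hx, hy]
      | tmul a₁ a₂ =>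
        simp only [TensorProduct.map_tmul, LinearMap.coe_comp]
        rw [show (φ.toLinearMap b₁ : B₁) = φ b₁ from rfl,
          show (φ.toLinearMap b₂ : B₁) = φ b₂ from rfl]
        simp [hequiv]
  have e1 : h (ρ₁ G (twMul k B₁ A₁ ρ₁ F₁ a b)) =
      h (LinearMap.mul' k A₁ (act2 k B₁ A₁ ρ₁
        (TensorProduct.map φ.toLinearMap φ.toLinearMap F₂) (ρ₁ G a ⊗ₜ[k] ρ₁ G b))) := by
    congr 1
    have hc := LinearMap.congr_fun (hρ₁.1 G) (act2 k B₁ A₁ ρ₁ F₁ (a ⊗ₜ[k] b))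
    have h1 := LinearMap.congr_fun (act2_mul ρ₁ (Coalgebra.comul (R := k) G) F₁) (a ⊗ₜ[k] b)
    have h2 := LinearMap.congr_fun (act2_mul ρ₁
      (TensorProduct.map φ.toLinearMap φ.toLinearMap F₂) (G ⊗ₜ[k] G)) (a ⊗ₜ[k] b)
    simp only [LinearMap.comp_apply] at hc h1 h2
    rw [twMul, hc, ← h1, hG, h2, act2_tmul]
    simp
  rw [e1, hmul, ← hequiv2 F₂ (ρ₁ G a ⊗ₜ[k] ρ₁ G b)]
  simp [twMul]
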